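/- Let u_- ≥ 0 ≥ u_+ with u_- > u_+ and v_± > 0. With v_*(ε) the two-shock intermediate density and σ₂(ε) - σ₁(ε) = (u_+ + √(u_+² + 4ε v_+))/2 - (u_- - √(u_-² + 4ε v_-))/2 the difference of shock speeds, one has (σ₂(ε) - σ₁(ε))·v_*(ε) → u_- v_+ - u_+ v_- as ε → 0⁺. -/

import Mathlib

open Filter Real Set

set_option maxHeartbeats 1000000 in
theorem weight_limit (um up vm vp : ℝ) (h1 : um ≥ 0) (h2 : 0 ≥ up)
    (h3 : um > up) (hvm : 0 < vm) (hvp : 0 < vp) :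
    Filter.Tendsto (fun e : ℝ =>
      ((up + Real.sqrt (up ^ 2 + 4 * e * vp)) / 2 -
        (um - Real.sqrt (um ^ 2 + 4 * e * vm)) / 2) *
        ((up - um - ((up + Real.sqrt (up ^ 2 + 4 * e * vp)) / (2 * vp)) * vp + ((um - Real.sqrt (um ^ 2 + 4 * e * vm)) / (2 * vm)) * vm) / ((um - Real.sqrt (um ^ 2 + 4 * e * vm)) / (2 * vm) - (up + Real.sqrt (up ^ 2 + 4 * e * vp)) / (2 * vp))))
      (nhdsWithin 0 (Set.Ioi 0)) (nhds (um * vp - up * vm)) := by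
  have hK : 0 < vp * um ^ 2 + vm * up ^ 2 := by
    rcases eq_or_lt_of_le h1 with h | h
    · have hup' : up < 0 := by linarith
      nlinarith [mul_pos hvm (mul_pos (neg_pos.mpr hup') (neg_pos.mpr hup')),
        mul_nonneg hvp.le (sq_nonneg um)]
    · nlinarith [mul_pos hvp (mul_pos h h), mul_nonneg hvm.le (sq_nonneg up)]
  -- basic limits
  have hAt : Tendsto (fun e : ℝ => Real.sqrt (up ^ 2 + 4 * e * vp)) (nhdsWithin 0 (Set.Ioi 0)) (nhds (-up)) := by
    have hc : Continuous fun e : ℝ => Real.sqrt (up ^ 2 + 4 * e * vp) := by continuity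
    have := (hc.tendsto 0).mono_left (nhdsWithin_le_nhds (s := Set.Ioi (0:ℝ)))
    simpa [Real.sqrt_sq_eq_abs, abs_of_nonpos h2] using this
  have hBt : Tendsto (fun e : ℝ => Real.sqrt (um ^ 2 + 4 * e * vm)) (nhdsWithin 0 (Set.Ioi 0)) (nhds um) := by
    have hc : Continuous fun e : ℝ => Real.sqrt (um ^ 2 + 4 * e * vm) := by continuity
    have := (hc.tendsto 0).mono_left (nhdsWithin_le_nhds (s := Set.Ioi (0:ℝ)))
    simpa [Real.sqrt_sq_eq_abs, abs_of_nonneg h1] using this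
  have he0 : Tendsto (fun e : ℝ => e) (nhdsWithin 0 (Set.Ioi 0)) (nhds 0) :=
    tendsto_id.mono_right nhdsWithin_le_nhds
  -- pointwise facts for e > 0
  have facts : ∀ e : ℝ, e ∈ Set.Ioi (0:ℝ) →
      (Real.sqrt (up ^ 2 + 4 * e * vp)) ^ 2 = up ^ 2 + 4 * e * vp ∧
      (Real.sqrt (um ^ 2 + 4 * e * vm)) ^ 2 = um ^ 2 + 4 * e * vm ∧
      -up < Real.sqrt (up ^ 2 + 4 * e * vp) ∧
      um < Real.sqrt (um ^ 2 + 4 * e * vm) := by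
    intro e he
    have he' : (0:ℝ) < e := he
    have hp1 : (0:ℝ) ≤ up ^ 2 + 4 * e * vp := by nlinarith [sq_nonneg up]
    have hp2 : (0:ℝ) ≤ um ^ 2 + 4 * e * vm := by nlinarith [sq_nonneg um]
    have ha2 := Real.sq_sqrt hp1
    have hb2 := Real.sq_sqrt hp2
    have ha0 : 0 ≤ Real.sqrt (up ^ 2 + 4 * e * vp) := Real.sqrt_nonneg _
    have hb0 : 0 ≤ Real.sqrt (um ^ 2 + 4 * e * vm) := Real.sqrt_nonneg _
    refine ⟨ha2, hb2, ?_, ?_⟩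
    · nlinarith [mul_pos he' hvp]
    · nlinarith [mul_pos he' hvm]
  -- squeeze for F
  have hFt : Tendsto (fun e : ℝ =>
      (um + Real.sqrt (um ^ 2 + 4 * e * vm)) * (Real.sqrt (up ^ 2 + 4 * e * vp) - up) /
        (Real.sqrt (up ^ 2 + 4 * e * vp) * Real.sqrt (um ^ 2 + 4 * e * vm) - um * up))
      (nhdsWithin 0 (Set.Ioi 0)) (nhds 2) := by
    have hlow : Tendsto (fun e : ℝ => 2 - 4 * e * vm * vp / (vp * um ^ 2 + vm * up ^ 2))
        (nhdsWithin 0 (Set.Ioi 0)) (nhds 2) := by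
      have : Tendsto (fun e : ℝ => 4 * e * vm * vp / (vp * um ^ 2 + vm * up ^ 2))
          (nhdsWithin 0 (Set.Ioi 0)) (nhds 0) := by
        have := (((he0.const_mul 4).mul_const vm).mul_const vp).div_const (vp * um ^ 2 + vm * up ^ 2)
        simpa using this
      simpa using (tendsto_const_nhds (x := (2:ℝ)) (f := nhdsWithin (0:ℝ) (Set.Ioi 0))).sub this
    refine tendsto_of_tendsto_of_tendsto_of_le_of_le' hlow tendsto_const_nhds ?_ ?_
    · filter_upwards [eventually_mem_nhdsWithin] with e he
      obtain ⟨ha2, hb2, haup, hbum⟩ := facts e he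
      set a := Real.sqrt (up ^ 2 + 4 * e * vp) with hadef
      set b := Real.sqrt (um ^ 2 + 4 * e * vm) with hbdef
      have he' : (0:ℝ) < e := he
      have ha0 : 0 < a := lt_of_le_of_lt (neg_nonneg.mpr h2) haup
      have hb0 : 0 < b := lt_of_le_of_lt h1 hbum
      have hmn : 0 ≤ um * (-up) := mul_nonneg h1 (neg_nonneg.mpr h2)
      have hab : 0 < a * b - um * up := by nlinarith [mul_pos ha0 hb0]
      have h7 : 4 * e * (vp * um ^ 2 + vm * up ^ 2) ≤ (a - up) * (b + um) * (a * b - um * up) := by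
        have p1 : a * b ≤ (a - up) * (b + um) := by
          nlinarith [mul_nonneg ha0.le h1, mul_nonneg (neg_nonneg.mpr h2) hb0.le,
            mul_nonneg (neg_nonneg.mpr h2) h1]
        have p2 : a * b ≤ a * b - um * up := by nlinarith
        have p3 : a * b * (a * b) ≤ (a - up) * (b + um) * (a * b - um * up) :=
          mul_le_mul p1 p2 (mul_pos ha0 hb0).le (mul_nonneg (by linarith) (by linarith))
        have p4 : a * b * (a * b) = (up ^ 2 + 4 * e * vp) * (um ^ 2 + 4 * e * vm) := by
          linear_combination (b ^ 2) * ha2 + (up ^ 2 + 4 * e * vp) * hb2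
        nlinarith [sq_nonneg (um * up), mul_pos (mul_pos he' hvm) (mul_pos he' hvp)]
      have hkey : (vp * um ^ 2 + vm * up ^ 2) * ((a + up) * (b - um)) ≤ 4 * e * vm * vp * (a * b - um * up) := by
        have hnn : 0 ≤ (a + up) * (b - um) := mul_nonneg (by linarith) (by linarith)
        have h10 := mul_le_mul_of_nonneg_right h7 hnn
        have h9 : (a - up) * (b + um) * (a * b - um * up) * ((a + up) * (b - um))
            = 16 * e ^ 2 * vm * vp * (a * b - um * up) := by
          linear_combination ((a * b - um * up) * (b ^ 2 - um ^ 2)) * ha2 +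
            ((a * b - um * up) * (4 * e * vp)) * hb2
        have h12 : (4 * e) * ((vp * um ^ 2 + vm * up ^ 2) * ((a + up) * (b - um)))
            ≤ (4 * e) * (4 * e * vm * vp * (a * b - um * up)) := by linarith
        exact le_of_mul_le_mul_left h12 (by linarith)
      have hstep : 2 - (um + b) * (a - up) / (a * b - um * up) ≤ 4 * e * vm * vp / (vp * um ^ 2 + vm * up ^ 2) := by
        have heq2 : 2 - (um + b) * (a - up) / (a * b - um * up) = (a + up) * (b - um) / (a * b - um * up) := by
          rw [eq_div_iff hab.ne', sub_mul, div_mul_cancel₀ _ hab.ne']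
          ring
        rw [heq2, div_le_div_iff₀ hab hK]
        linarith [hkey]
      linarith [hstep]
    · filter_upwards [eventually_mem_nhdsWithin] with e he
      obtain ⟨ha2, hb2, haup, hbum⟩ := facts e he
      set a := Real.sqrt (up ^ 2 + 4 * e * vp) with hadef
      set b := Real.sqrt (um ^ 2 + 4 * e * vm) with hbdef
      have ha0 : 0 < a := lt_of_le_of_lt (neg_nonneg.mpr h2) haup
      have hb0 : 0 < b := lt_of_le_of_lt h1 hbum
      have hmn : 0 ≤ um * (-up) := mul_nonneg h1 (neg_nonneg.mpr h2)
      have hab : 0 < a * b - um * up := by nlinarith [mul_pos ha0 hb0]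
      rw [div_le_iff₀ hab]
      linarith [mul_nonneg (by linarith : (0:ℝ) ≤ a + up) (by linarith : (0:ℝ) ≤ b - um)]
  -- limit of the simplified expression G
  have hprod : Tendsto (fun e : ℝ => (um + Real.sqrt (um ^ 2 + 4 * e * vm)) * (Real.sqrt (up ^ 2 + 4 * e * vp) - up))
      (nhdsWithin 0 (Set.Ioi 0)) (nhds ((um + um) * (-up - up))) :=
    (tendsto_const_nhds.add hBt).mul (hAt.sub_const up)
  have hcoef : Tendsto (fun e : ℝ => 4 * (vp * um ^ 2 + vm * up ^ 2 + 4 * e * vm * vp))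
      (nhdsWithin 0 (Set.Ioi 0)) (nhds (4 * (vp * um ^ 2 + vm * up ^ 2 + 4 * 0 * vm * vp))) :=
    (tendsto_const_nhds.add (((he0.const_mul 4).mul_const vm).mul_const vp)).const_mul 4
  have hnum : Tendsto (fun e : ℝ =>
      4 * (vp * um ^ 2 + vm * up ^ 2 + 4 * e * vm * vp) *
        ((um + Real.sqrt (um ^ 2 + 4 * e * vm)) * (Real.sqrt (up ^ 2 + 4 * e * vp) - up) /
          (Real.sqrt (up ^ 2 + 4 * e * vp) * Real.sqrt (um ^ 2 + 4 * e * vm) - um * up)) +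
        2 * (vm + vp) * ((um + Real.sqrt (um ^ 2 + 4 * e * vm)) * (Real.sqrt (up ^ 2 + 4 * e * vp) - up)))
      (nhdsWithin 0 (Set.Ioi 0))
      (nhds (4 * (vp * um ^ 2 + vm * up ^ 2 + 4 * 0 * vm * vp) * 2 + 2 * (vm + vp) * ((um + um) * (-up - up)))) :=
    (hcoef.mul hFt).add (tendsto_const_nhds.mul hprod)
  have hden : Tendsto (fun e : ℝ =>
      4 * (Real.sqrt (up ^ 2 + 4 * e * vp) + Real.sqrt (um ^ 2 + 4 * e * vm) + um - up))
      (nhdsWithin 0 (Set.Ioi 0)) (nhds (4 * (-up + um + um - up))) :=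
    (((hAt.add hBt).add_const um).sub_const up).const_mul 4
  have hdenne : (4 : ℝ) * (-up + um + um - up) ≠ 0 := by nlinarith [h3]
  have hG := hnum.div hden hdenne
  have hval : (4 * (vp * um ^ 2 + vm * up ^ 2 + 4 * 0 * vm * vp) * 2 + 2 * (vm + vp) * ((um + um) * (-up - up))) /
      (4 * (-up + um + um - up)) = um * vp - up * vm := by
    rw [div_eq_iff hdenne]; ring
  rw [hval] at hG
  -- eventual equality between G and the original expression
  refine hG.congr' ?_
  filter_upwards [eventually_mem_nhdsWithin] with e he
  obtain ⟨ha2, hb2, haup, hbum⟩ := facts e he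
  set a := Real.sqrt (up ^ 2 + 4 * e * vp) with hadef
  set b := Real.sqrt (um ^ 2 + 4 * e * vm) with hbdef
  have he' : (0:ℝ) < e := he
  have ha0 : 0 < a := lt_of_le_of_lt (neg_nonneg.mpr h2) haup
  have hb0 : 0 < b := lt_of_le_of_lt h1 hbum
  have hmn : 0 ≤ um * (-up) := mul_nonneg h1 (neg_nonneg.mpr h2)
  have hab : 0 < a * b - um * up := by nlinarith [mul_pos ha0 hb0]
  have habne : a * b - um * up ≠ 0 := ne_of_gt hab
  have hT : 0 < a + b + um - up := by linarith
  have hTne : a + b + um - up ≠ 0 := ne_of_gt hT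
  have hdne2 : (um - b) * (2 * vp) - 2 * vm * (up + a) ≠ 0 := by
    have d1 : (um - b) * (2 * vp) < 0 := mul_neg_of_neg_of_pos (by linarith) (by linarith)
    have d2 : 0 < 2 * vm * (up + a) := by
      have : 0 < up + a := by linarith
      positivity
    exact ne_of_lt (by linarith)
  have hvmne : vm ≠ 0 := ne_of_gt hvm
  have hvpne : vp ≠ 0 := ne_of_gt hvp
  have hene : e ≠ 0 := ne_of_gt he'
  have hdne3 : um * vp - up * vm - vm * a - vp * b ≠ 0 := by
    intro h; apply hdne2; linarith
  have hba : b * a - um * up ≠ 0 := by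
    intro h; apply habne; linarith
  have hden4 : vp * (um - b) - vm * (up + a) ≠ 0 := by
    intro h; apply hdne2; linarith
  simp only [Pi.div_apply]
  rw [← hadef, ← hbdef]
  field_simp
  linear_combination (-8*um^3*vm*vp - 8*um*up^2*vm^2 - 32*um*vm^2*vp*e - 8*um^2*vm*vp*b + 4*um*up*vm^2*b - 4*um*vm^2*a*b + 4*um^2*vp^2*b + 4*um^2*up*vm^2 - 8*up^2*vm^2*b - 32*vm^2*vp*e*b + 8*vm*vp*b^3 - 4*vm^2*a*b^2 - 4*vp^2*b^3 + 8*vm*vp*a*b^2 - 4*up*vm*vp*a*b + 4*vm*vp*a^2*b - 8*up*vm*vp*b^2 + 8*um*vm*vp*b^2 + 4*um*up^2*vm*vp - 4*um*up*vm*vp*a + 16*vm*vp^2*e*b) * ha2 + (4*um*up*vp^2*a - 8*um^2*vp^2*a + 8*um^2*up*vp^2 + 4*up*vp^2*a*b - 4*um*up^2*vp^2 + 4*um*vm*vp*a*b + 4*vm*vp*a*b^2 - 4*um^2*up*vm*vp - 4*um*up*vm*vp*b + 8*up^2*vm*vp*b + 32*vm*vp^2*e*b - 4*up^2*vp^2*b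 - 16*vp^3*e*b + 8*um*up^2*vm*vp + 32*um*vm*vp^2*e) * hb2
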